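/- Let d ≥ 2 and let e be any directed edge of the Kautz digraph K(d,D). Then cong(e) = ∑_{k=1}^{D} U_k(e) ≥ (d/(d−1))·(1 − 1/(D·(d−1)))·U_D(e). -/

import Mathlib

open scoped BigOperators Classical

namespace Kautz

/-- A vertex of the Kautz digraph `K(d,D)`: a word of length `D` over the
alphabet `{0,1,…,d}` in which adjacent letters are distinct. -/
structure Vertex (d D : ℕ) where
  word : List (Fin (d+1))
  length_eq : word.length = D
  chain : word.Chain' (· ≠ ·)

/-- Adjacency in `K(d,D)`: there is an edge `u → v` iff some word `w` of length
`D+1` with adjacent letters distinct has `u` as its prefix of length `D` and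
`v` as its suffix of length `D`. -/
def Adj {d D : ℕ} (u v : Vertex d D) : Prop :=
  ∃ w : List (Fin (d+1)), w.length = D + 1 ∧ w.Chain' (· ≠ ·) ∧
    u.word = w.dropLast ∧ v.word = w.tail

/-- A directed edge of `K(d,D)`. -/
structure Edge (d D : ℕ) where
  src : Vertex d D
  tgt : Vertex d D
  adj : Adj src tgt

/-- The edge-word `w(e) = a₀a₁⋯a_D` of an edge `e : u → v`, namely `u`
followed by the last letter of `v`. -/
def Edge.word {d D : ℕ} (e : Edge d D) : List (Fin (d+1)) :=
  e.src.word ++ e.tgt.word.drop (D - 1)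

/-- `p` is a walk from `x` to `y`, recorded as the list of successive vertices. -/
def IsWalk {d D : ℕ} (p : List (Vertex d D)) (x y : Vertex d D) : Prop :=
  p.head? = some x ∧ p.getLast? = some y ∧ p.Chain' Adj

/-- Directed graph distance in `K(d,D)`. -/
noncomputable def dist {d D : ℕ} (x y : Vertex d D) : ℕ :=
  sInf {k | ∃ p : List (Vertex d D), IsWalk p x y ∧ p.length = k + 1}

/-- `N(e;k,t)`: the number of ordered pairs `(x,y)` with `dist x y = k` such
that some geodesic (walk of length `k = dist x y`) from `x` to `y` uses `e` as
its `t`-th edge. -/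
noncomputable def N {d D : ℕ} (e : Edge d D) (k t : ℕ) : ℕ :=
  Set.ncard {xy : Vertex d D × Vertex d D |
    dist xy.1 xy.2 = k ∧
    ∃ p : List (Vertex d D), IsWalk p xy.1 xy.2 ∧ p.length = k + 1 ∧
      p[t-1]? = some e.src ∧ p[t]? = some e.tgt}

/-- `U_k(e) = ∑_{t=1}^{k} N(e;k,t)`. -/
noncomputable def U {d D : ℕ} (e : Edge d D) (k : ℕ) : ℕ :=
  ∑ t ∈ Finset.Icc 1 k, N e k t

/-- `cong(e) = ∑_{k=1}^{D} U_k(e)`. -/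
noncomputable def cong {d D : ℕ} (e : Edge d D) : ℕ :=
  ∑ k ∈ Finset.Icc 1 D, U e k

/-- `τ(d,D) = (D−1)·d^{D−2} + D·d^{D−1}`. -/
def tau (d D : ℕ) : ℕ := (D - 1) * d ^ (D - 2) + D * d ^ (D - 1)

/-- A word has a border: some proper nonempty prefix equals the suffix of the
same length. -/
def HasBorder {α : Type*} (w : List α) : Prop :=
  ∃ ℓ, 1 ≤ ℓ ∧ ℓ ≤ w.length - 1 ∧ w.take ℓ = w.drop (w.length - ℓ)

/-- An unbordered word. -/
def Unbordered {α : Type*} (w : List α) : Prop := ¬ HasBorder w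

/-- A square-free word: no nonempty factor of the form `XX`. -/
def SquareFree {α : Type*} (w : List α) : Prop :=
  ¬ ∃ X : List α, X ≠ [] ∧ (X ++ X) <:+: w

/-- A `7/4⁺`-power-free word: no factor `x^k y` with `x` nonempty, `k ≥ 1`,
`y` a prefix of `x`, and `(k·|x| + |y|)/|x| > 7/4`. -/
def SevenFourthsPlusFree {α : Type*} (w : List α) : Prop :=
  ¬ ∃ (x y : List α) (k : ℕ), x ≠ [] ∧ 1 ≤ k ∧ y <+: x ∧
    ((List.replicate k x).flatten ++ y) <:+: w ∧
    7 * x.length < 4 * (k * x.length + y.length)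

/-- A word over `{0,1,…,d}` is ternary if it uses only the letters `{0,1,2}`. -/
def IsTernary {n : ℕ} (w : List (Fin n)) : Prop := ∀ a ∈ w, (a : ℕ) < 3

/-- The suffix of `w` of length `t`. -/
def suffixWord {α : Type*} (w : List α) (t : ℕ) : List α := w.drop (w.length - t)

/-- `R_t(w)`: the set of admissible overlap lengths `r` at position `t`, i.e.
those `r` with `t+1 ≤ r ≤ |w|−t−1` such that `w = A·B·V·B` where `B` is the
suffix of `w` of length `t`, `V` is nonempty, and `|B·V| = r`. -/
noncomputable def Rt {α : Type*} (w : List α) (t : ℕ) : Finset ℕ :=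
  (Finset.Icc (t + 1) (w.length - t - 1)).filter fun r =>
    ∃ A V : List α, V ≠ [] ∧
      w = A ++ suffixWord w t ++ V ++ suffixWord w t ∧ t + V.length = r

/-- The deficit `Δ_t(e) = d^{D−1} − N(e;D,t)`. -/
noncomputable def deficit {d D : ℕ} (e : Edge d D) (t : ℕ) : ℝ :=
  (d : ℝ) ^ (D - 1) - (N e D t : ℝ)

/-- The total deficit `Δ(e) = ∑_{t=1}^{D} Δ_t(e)`. -/
noncomputable def totalDeficit {d D : ℕ} (e : Edge d D) : ℝ :=
  ∑ t ∈ Finset.Icc 1 D, deficit e t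

/-- The weighted overlap count
`Ω_d(e) = ∑_{j=1}^{⌈(D+1)/2⌉} ∑_{r ∈ R_j(w(e))} d^{−(r−j)}`. -/
noncomputable def Omega {d D : ℕ} (e : Edge d D) : ℝ :=
  ∑ j ∈ Finset.Icc 1 ((D + 2) / 2), ∑ r ∈ Rt e.word j, (d : ℝ) ^ ((j : ℤ) - (r : ℤ))

/-- The overlap `ov(u,v)`: the largest `j ≤ D` such that the last `j` letters
of `u` equal the first `j` letters of `v`. -/
noncomputable def ov {d D : ℕ} (u v : Vertex d D) : ℕ :=
  sSup {j | j ≤ D ∧ u.word.drop (D - j) = v.word.take j}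

end Kautz

namespace Kautz

variable {d D : ℕ}

theorem Vertex.ext' {v w : Vertex d D} (h : v.word = w.word) : v = w := by
  cases v; cases w; cases h; rfl

instance : Finite (Vertex d D) := by
  apply Finite.of_injective (fun v : Vertex d D => (fun j : Fin D => v.word.getD j (0 : Fin (d+1))))
  intro v w h
  apply Vertex.ext'
  apply List.ext_getElem (by rw [v.length_eq, w.length_eq])
  intro j h1 h2
  have hj : j < D := by rw [← v.length_eq]; exact h1
  have hh := congrFun h ⟨j, hj⟩
  simp only [] at hh
  rwa [List.getD_eq_getElem _ _ h1, List.getD_eq_getElem _ _ h2] at hh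

/-- encode a letter `a` known to differ from `b` as an element of `Fin d`. -/
def pi (hd : 0 < d) (a b : Fin (d+1)) : Fin d :=
  ⟨if a.val < b.val then a.val else a.val - 1, by
    have ha := a.isLt; have hb := b.isLt; split <;> omega⟩

theorem pi_inj (hd : 0 < d) {a a' b : Fin (d+1)} (h1 : a ≠ b) (h2 : a' ≠ b)
    (h : pi hd a b = pi hd a' b) : a = a' := by
  have h1' : a.val ≠ b.val := fun hh => h1 (Fin.ext hh)
  have h2' : a'.val ≠ b.val := fun hh => h2 (Fin.ext hh)
  have h3 := congrArg Fin.val h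
  simp only [pi] at h3
  have ha := a.isLt; have hb := b.isLt; have ha' := a'.isLt
  apply Fin.ext
  split at h3 <;> split at h3 <;> omega

theorem chain_ne_getD {α : Type*} (d0 : α) {w : List α} (hc : w.Chain' (· ≠ ·)) {j : ℕ}
    (hj : j + 1 < w.length) : w.getD j d0 ≠ w.getD (j+1) d0 := by
  have h := List.isChain_iff_getElem.mp hc j (by omega)
  rw [List.getD_eq_getElem _ d0 (show j < w.length by omega), List.getD_eq_getElem _ d0 hj]
  simpa [List.get_eq_getElem] using h

theorem recover_right {α β : Type*} (π : α → α → β)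
    (hπ : ∀ a a' b, a ≠ b → a' ≠ b → π a b = π a' b → a = a')
    (d0 : α) {w w' : List α} {i : ℕ}
    (hc : w.Chain' (· ≠ ·)) (hc' : w'.Chain' (· ≠ ·))
    (hlen : w.length = w'.length) (hi : i < w.length)
    (hdrop : w.drop i = w'.drop i)
    (hcode : ∀ j < i, π (w.getD j d0) (w.getD (j+1) d0) = π (w'.getD j d0) (w'.getD (j+1) d0)) :
    w = w' := by
  suffices h : ∀ c, c ≤ i → w.drop (i - c) = w'.drop (i - c) by
    have h0 := h i le_rfl
    simp only [Nat.sub_self] at h0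
    simpa using h0
  intro c hc1
  induction c with
  | zero => simpa using hdrop
  | succ c ih =>
    have hdc : w.drop (i - c) = w'.drop (i - c) := ih (by omega)
    set j := i - (c+1) with hjdef
    have hj1 : j + 1 = i - c := by omega
    have hjlt : j < i := by omega
    have hjw : j < w.length := by omega
    have hj1w : j + 1 < w.length := by omega
    have hj1w' : j + 1 < w'.length := by omega
    have htl : w.drop (j+1) = w'.drop (j+1) := by rw [hj1]; exact hdc
    have hb : w.getD (j+1) d0 = w'.getD (j+1) d0 := by
      have : w[j+1]? = w'[j+1]? := by
        have e1 : (w.drop (j+1))[0]? = w[j+1+0]? := List.getElem?_drop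
        have e2 : (w'.drop (j+1))[0]? = w'[j+1+0]? := List.getElem?_drop
        rw [htl] at e1
        simpa using e1.symm.trans e2
      simp only [List.getD_eq_getElem?_getD, this]
    have hhead : w.getD j d0 = w'.getD j d0 := by
      apply hπ _ _ (w.getD (j+1) d0)
      · exact chain_ne_getD d0 hc hj1w
      · rw [hb]; exact chain_ne_getD d0 hc' (by omega)
      · exact (hcode j hjlt).trans (by rw [hb])
    rw [List.drop_eq_getElem_cons hjw, List.drop_eq_getElem_cons (show j < w'.length by omega)]
    have hw : w[j] = w.getD j d0 := (List.getD_eq_getElem _ d0 hjw).symm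
    have hw' : w'[j] = w'.getD j d0 := (List.getD_eq_getElem _ d0 (by omega)).symm
    rw [hw, hw', hhead, htl]

theorem recover_left {α β : Type*} (π : α → α → β)
    (hπ : ∀ a a' b, a ≠ b → a' ≠ b → π a b = π a' b → a = a')
    (d0 : α) {w w' : List α} {i : ℕ}
    (hc : w.Chain' (· ≠ ·)) (hc' : w'.Chain' (· ≠ ·))
    (hlen : w.length = w'.length) (hi1 : 1 ≤ i) (hiw : i ≤ w.length)
    (htake : w.take i = w'.take i)
    (hcode : ∀ j, i ≤ j → j < w.length →
      π (w.getD j d0) (w.getD (j-1) d0) = π (w'.getD j d0) (w'.getD (j-1) d0)) :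
    w = w' := by
  suffices h : ∀ c, i + c ≤ w.length → w.take (i + c) = w'.take (i + c) by
    have h0 := h (w.length - i) (by omega)
    rw [show i + (w.length - i) = w.length by omega] at h0
    rw [List.take_of_length_le le_rfl, List.take_of_length_le (by omega)] at h0
    exact h0
  intro c
  induction c with
  | zero => intro _; simpa using htake
  | succ c ih =>
    intro hcl
    have hprev : w.take (i + c) = w'.take (i + c) := ih (by omega)
    set j := i + c with hjdef
    have hjw : j < w.length := by omega
    have hjw' : j < w'.length := by omega
    have hb : w.getD (j-1) d0 = w'.getD (j-1) d0 := by
      have hlt : j - 1 < i + c := by omega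
      have e1 : (w.take (i+c))[j-1]? = w[j-1]? := List.getElem?_take_of_lt hlt
      have e2 : (w'.take (i+c))[j-1]? = w'[j-1]? := List.getElem?_take_of_lt hlt
      rw [hprev] at e1
      have := e1.symm.trans e2
      simp only [List.getD_eq_getElem?_getD, this]
    have hhead : w.getD j d0 = w'.getD j d0 := by
      apply hπ _ _ (w.getD (j-1) d0)
      · have := chain_ne_getD d0 hc (show (j-1) + 1 < w.length by omega)
        rw [show j - 1 + 1 = j by omega] at this
        exact this.symm
      · rw [hb]
        have := chain_ne_getD d0 hc' (show (j-1) + 1 < w'.length by omega)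
        rw [show j - 1 + 1 = j by omega] at this
        exact this.symm
      · exact (hcode j (by omega) hjw).trans (by rw [hb])
    rw [show i + (c+1) = j + 1 by omega, List.take_succ, List.take_succ, hprev]
    congr 1
    rw [List.getElem?_eq_getElem hjw, List.getElem?_eq_getElem hjw']
    have hw : w[j] = w.getD j d0 := (List.getD_eq_getElem _ d0 hjw).symm
    have hw' : w'[j] = w'.getD j d0 := (List.getD_eq_getElem _ d0 hjw').symm
    rw [hw, hw', hhead]

theorem adj_take {u v : Vertex d D} (h : Adj u v) : v.word.take (D-1) = u.word.drop 1 := by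
  obtain ⟨w, hw1, _, hu, hv⟩ := h
  rw [hu, hv, List.dropLast_eq_take, hw1]
  rw [show w.tail = w.drop 1 from List.drop_one.symm]
  rw [← List.drop_take]
  congr 2

theorem chain_adj {p : List (Vertex d D)} (hp : p.Chain' Adj) {j : ℕ} (hj : j + 1 < p.length) :
    Adj (p[j]'(by omega)) (p[j+1]'hj) := by
  have h := List.isChain_iff_getElem.mp hp j (by omega)
  simpa [List.get_eq_getElem] using h

theorem walk_word_drop {p : List (Vertex d D)} (hp : p.Chain' Adj) {j : ℕ}
    (hj : j < p.length) (hjD : j ≤ D) (h0 : 0 < p.length) :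
    (p[0]'h0).word.drop j = (p[j]'hj).word.take (D - j) := by
  induction j with
  | zero =>
    simp [List.take_of_length_le (le_of_eq (p[0]'h0).length_eq)]
  | succ j ih =>
    have hjlt : j < p.length := by omega
    have hprev := ih hjlt (by omega)
    have hadj : Adj (p[j]'hjlt) (p[j+1]'hj) := chain_adj hp hj
    calc (p[0]'h0).word.drop (j+1)
        = ((p[0]'h0).word.drop j).drop 1 := by rw [List.drop_drop]
      _ = ((p[j]'hjlt).word.take (D-j)).drop 1 := by rw [hprev]
      _ = ((p[j]'hjlt).word.drop 1).take (D-j-1) := by rw [List.drop_take]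
      _ = ((p[j+1]'hj).word.take (D-1)).take (D-j-1) := by rw [adj_take hadj]
      _ = (p[j+1]'hj).word.take (D-(j+1)) := by rw [List.take_take]; congr 1; omega

theorem walk_word_take {p : List (Vertex d D)} (hp : p.Chain' Adj) {j n : ℕ}
    (hn : p.length = n + 1) (hj : j ≤ n) (hjD : j ≤ D) :
    (p[n-j]'(by omega)).word.drop j = (p[n]'(by omega)).word.take (D - j) := by
  induction j with
  | zero =>
    simp [List.take_of_length_le (le_of_eq (p[n]'(by omega)).length_eq)]
  | succ j ih =>
    have hprev := ih (by omega) (by omega)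
    have hadj : Adj (p[n-(j+1)]'(by omega)) (p[n-j]'(by omega)) := by
      have := chain_adj hp (show (n-(j+1)) + 1 < p.length by omega)
      convert this using 2
      omega
    calc (p[n-(j+1)]'(by omega)).word.drop (j+1)
        = ((p[n-(j+1)]'(by omega)).word.drop 1).drop j := by rw [List.drop_drop]; congr 1; omega
      _ = ((p[n-j]'(by omega)).word.take (D-1)).drop j := by rw [adj_take hadj]
      _ = ((p[n-j]'(by omega)).word.drop j).take (D-1-j) := by rw [List.drop_take]
      _ = ((p[n]'(by omega)).word.take (D-j)).take (D-1-j) := by rw [hprev]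
      _ = (p[n]'(by omega)).word.take (D-(j+1)) := by rw [List.take_take]; congr 1; omega

theorem isWalk_ne_nil {p : List (Vertex d D)} {x y : Vertex d D} (h : IsWalk p x y) : p ≠ [] := by
  intro hh
  rw [hh] at h
  simp [IsWalk] at h

theorem isWalk_getElem_zero {p : List (Vertex d D)} {x y : Vertex d D} (h : IsWalk p x y)
    (h0 : 0 < p.length) : p[0]'h0 = x := by
  have := h.1
  rw [List.head?_eq_getElem?, List.getElem?_eq_getElem h0] at this
  exact Option.some_injective _ this

theorem isWalk_getElem_last {p : List (Vertex d D)} {x y : Vertex d D} (h : IsWalk p x y)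
    {n : ℕ} (hn : p.length = n + 1) : p[n]'(by omega) = y := by
  have := h.2.1
  rw [List.getLast?_eq_getElem?, hn] at this
  simp only [Nat.add_sub_cancel] at this
  rw [List.getElem?_eq_getElem (by omega)] at this
  exact Option.some_injective _ this

theorem dist_le_walk {x y : Vertex d D} {p : List (Vertex d D)} (h : IsWalk p x y) :
    dist x y ≤ p.length - 1 := by
  have hne : p ≠ [] := isWalk_ne_nil h
  have hlen : 0 < p.length := List.length_pos_iff.mpr hne
  exact Nat.sInf_le ⟨p, h, by omega⟩

theorem exists_geodesic {x y : Vertex d D} {p : List (Vertex d D)} (h : IsWalk p x y) :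
    ∃ q, IsWalk q x y ∧ q.length = dist x y + 1 := by
  have hne : 0 < p.length := List.length_pos_iff.mpr (isWalk_ne_nil h)
  have hmem : dist x y ∈ {k | ∃ p : List (Vertex d D), IsWalk p x y ∧ p.length = k + 1} :=
    Nat.sInf_mem ⟨p.length - 1, p, h, by omega⟩
  exact hmem

theorem subwalk {p : List (Vertex d D)} {x y : Vertex d D} (hw : IsWalk p x y) {i j : ℕ}
    (hij : i ≤ j) (hj : j < p.length) :
    IsWalk ((p.drop i).take (j - i + 1)) (p[i]'(by omega)) (p[j]'hj) ∧
      ((p.drop i).take (j - i + 1)).length = j - i + 1 := by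
  have hlen : ((p.drop i).take (j - i + 1)).length = j - i + 1 := by
    simp [List.length_take, List.length_drop]
    omega
  refine ⟨⟨?_, ?_, (hw.2.2.drop i).take _⟩, hlen⟩
  · rw [List.head?_eq_getElem?, List.getElem?_take_of_lt (by omega), List.getElem?_drop,
      Nat.add_zero, List.getElem?_eq_getElem (by omega)]
  · rw [List.getLast?_eq_getElem?, hlen]
    simp only [Nat.add_sub_cancel]
    rw [List.getElem?_take_of_lt (by omega), List.getElem?_drop,
      List.getElem?_eq_getElem (by omega)]
    congr 2
    omega

theorem walk_splice {x u y : Vertex d D} {p q : List (Vertex d D)}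
    (hp : IsWalk p x u) (hq : IsWalk q u y) :
    IsWalk (p ++ q.tail) x y ∧ (p ++ q.tail).length = p.length + q.length - 1 := by
  obtain ⟨hp1, hp2, hp3⟩ := hp
  obtain ⟨hq1, hq2, hq3⟩ := hq
  have hpne : p ≠ [] := by intro hh; rw [hh] at hp1; simp at hp1
  have hqne : q ≠ [] := by intro hh; rw [hh] at hq1; simp at hq1
  have hqpos : 0 < q.length := List.length_pos_iff.mpr hqne
  have hlen : (p ++ q.tail).length = p.length + q.length - 1 := by
    simp [List.length_append, List.length_tail]
    omega
  refine ⟨⟨?_, ?_, ?_⟩, hlen⟩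
  · rw [List.head?_append, hp1]; rfl
  · by_cases htail : q.tail = []
    · have hq1' : q.length = 1 := by
        cases q with
        | nil => simp at hqne
        | cons a t => simp at htail; simp [htail]
      have huy : u = y := by
        cases q with
        | nil => simp at hqne
        | cons a t =>
          simp only [List.tail_cons] at htail
          subst htail
          simp [List.head?] at hq1
          simp [List.getLast?] at hq2
          rw [← hq1, hq2]
      rw [htail, List.append_nil, hp2, huy]
    · rw [List.getLast?_append]
      have : q.tail.getLast? = some y := by
        have hq2' : q.tail.getLast? = q.getLast? := by
          have h2 : 2 ≤ q.length := by
            cases q with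
            | nil => simp at hqne
            | cons a t =>
              simp only [List.tail_cons] at htail
              have := List.length_pos_iff.mpr htail
              simp
              omega
          rw [List.getLast?_eq_getElem?, List.getLast?_eq_getElem?,
            show q.tail = q.drop 1 from List.drop_one.symm, List.getElem?_drop]
          congr 1
          simp [List.length_drop]
          omega
        rw [hq2', hq2]
      rw [this]
      rfl
  · apply hp3.append hq3.tail
    intro a ha b hb
    have hau : a = u := by
      rw [hp2] at ha
      have := ha
      simp at this
      exact this.symm
    have hq2l : 2 ≤ q.length := by
      have htne : q.tail ≠ [] := by
        intro hh
        rw [hh] at hb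
        simp at hb
      cases q with
      | nil => simp at hqne
      | cons c t =>
        simp only [List.tail_cons] at htne
        have := List.length_pos_iff.mpr htne
        simp
        omega
    have hb' : b = q[1]'(by omega) := by
      rw [show q.tail = q.drop 1 from List.drop_one.symm, List.head?_eq_getElem?,
        List.getElem?_drop, List.getElem?_eq_getElem (by omega)] at hb
      simpa using hb.symm
    have hq0 : q[0]'(by omega) = u := by
      rw [List.head?_eq_getElem?, List.getElem?_eq_getElem (by omega)] at hq1
      exact Option.some_injective _ hq1
    rw [hau, hb', ← hq0]
    exact chain_adj hq3 (by omega)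

theorem dist_of_subwalk {x y : Vertex d D} {p : List (Vertex d D)} (hw : IsWalk p x y)
    (hgeo : dist x y = p.length - 1) {i j : ℕ} (hij : i ≤ j) (hj : j < p.length) :
    dist (p[i]'(by omega)) (p[j]'hj) = j - i := by
  obtain ⟨hsub, hsublen⟩ := subwalk hw hij hj
  have hle : dist (p[i]'(by omega)) (p[j]'hj) ≤ j - i := by
    have := dist_le_walk hsub
    omega
  rcases Nat.lt_or_ge (dist (p[i]'(by omega)) (p[j]'hj)) (j - i) with hlt | hge
  · exfalso
    obtain ⟨q, hqw, hqlen⟩ := exists_geodesic hsub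
    -- prefix walk x → p[i]
    have hpre : IsWalk (p.take (i+1)) x (p[i]'(by omega)) := by
      obtain ⟨hs, _⟩ := subwalk hw (Nat.zero_le i) (show i < p.length by omega)
      rw [List.drop_zero, Nat.sub_zero] at hs
      rwa [isWalk_getElem_zero hw] at hs
    have hsuf : IsWalk (p.drop j) (p[j]'hj) y := by
      have hlast : j ≤ p.length - 1 := by omega
      obtain ⟨hs, _⟩ := subwalk hw hlast (show p.length - 1 < p.length by omega)
      have heq : (p.drop j).take (p.length - 1 - j + 1) = p.drop j := by
        apply List.take_of_length_le
        simp [List.length_drop]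
        omega
      rw [heq] at hs
      rwa [isWalk_getElem_last hw (show p.length = (p.length - 1) + 1 by omega)] at hs
    obtain ⟨hw1, hl1⟩ := walk_splice hpre hqw
    obtain ⟨hw2, hl2⟩ := walk_splice hw1 hsuf
    have hd := dist_le_walk hw2
    have hql : q.length = dist (p[i]'(by omega)) (p[j]'hj) + 1 := hqlen
    have hptl : (p.take (i+1)).length = i + 1 := by simp [List.length_take]; omega
    have hpdl : (p.drop j).length = p.length - j := by simp
    omega
  · omega

theorem key (hd : 2 ≤ d) (e : Edge d D) {k t t' : ℕ} (ht'1 : 1 ≤ t') (ht'k : t' ≤ k)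
    (hkD : k ≤ D) (ht't : t' ≤ t) (htub : t ≤ t' + (D - k)) :
    N e D t ≤ d ^ (D - k) * N e k t' := by
  classical
  have hd0 : 0 < d := by omega
  have hk1 : 1 ≤ k := ht'1.trans ht'k
  have hD1 : 1 ≤ D := hk1.trans hkD
  set i := t - t' with hidef
  set m := D - k - i with hmdef
  have hik : i + k ≤ D := by omega
  have him : i + m = D - k := by omega
  set S := {xy : Vertex d D × Vertex d D | dist xy.1 xy.2 = D ∧
    ∃ p : List (Vertex d D), IsWalk p xy.1 xy.2 ∧ p.length = D + 1 ∧
      p[t-1]? = some e.src ∧ p[t]? = some e.tgt} with hSdef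
  set T := {xy : Vertex d D × Vertex d D | dist xy.1 xy.2 = k ∧
    ∃ p : List (Vertex d D), IsWalk p xy.1 xy.2 ∧ p.length = k + 1 ∧
      p[t'-1]? = some e.src ∧ p[t']? = some e.tgt} with hTdef
  have hNS : N e D t = S.ncard := rfl
  have hNT : N e k t' = T.ncard := rfl
  let wk : Vertex d D × Vertex d D → List (Vertex d D) := fun xy =>
    if h : xy ∈ S then h.2.choose else []
  have wk_spec : ∀ xy (h : xy ∈ S), IsWalk (wk xy) xy.1 xy.2 ∧ (wk xy).length = D + 1 ∧
      (wk xy)[t-1]? = some e.src ∧ (wk xy)[t]? = some e.tgt := by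
    intro xy h
    simp only [wk, dif_pos h]
    exact h.2.choose_spec
  have main : ∀ xy, xy ∈ S → ∃ (hi' : i < (wk xy).length) (hik' : i + k < (wk xy).length),
      (wk xy).getD i xy.1 = (wk xy)[i]'hi' ∧
      (wk xy).getD (i+k) xy.1 = (wk xy)[i+k]'hik' ∧
      ((wk xy)[i]'hi', (wk xy)[i+k]'hik') ∈ T ∧
      xy.1.word.drop i = ((wk xy)[i]'hi').word.take (D - i) ∧
      xy.2.word.take (D - m) = ((wk xy)[i+k]'hik').word.drop m := by
    intro xy h
    obtain ⟨hw, hplen, hsrc, htgt⟩ := wk_spec xy h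
    set p := wk xy with hpdef
    have hi' : i < p.length := by omega
    have hik' : i + k < p.length := by omega
    refine ⟨hi', hik', List.getD_eq_getElem _ _ hi', List.getD_eq_getElem _ _ hik', ?_, ?_, ?_⟩
    · -- membership in T
      have hgeo : dist xy.1 xy.2 = p.length - 1 := by rw [h.1]; omega
      have hdist : dist (p[i]'hi') (p[i+k]'hik') = k := by
        have := dist_of_subwalk hw hgeo (Nat.le_add_right i k) hik'
        rwa [Nat.add_sub_cancel_left] at this
      refine ⟨hdist, (p.drop i).take (k+1), ?_, ?_, ?_, ?_⟩
      · have := (subwalk hw (Nat.le_add_right i k) hik').1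
        rwa [Nat.add_sub_cancel_left] at this
      · have := (subwalk hw (Nat.le_add_right i k) hik').2
        rwa [Nat.add_sub_cancel_left] at this
      · rw [List.getElem?_take_of_lt (by omega : t' - 1 < k + 1), List.getElem?_drop]
        rw [show i + (t' - 1) = t - 1 by omega]
        exact hsrc
      · rw [List.getElem?_take_of_lt (by omega : t' < k + 1), List.getElem?_drop]
        rw [show i + t' = t by omega]
        exact htgt
    · -- x word fact
      have h0 : 0 < p.length := by omega
      have := walk_word_drop hw.2.2 hi' (by omega) h0
      rwa [isWalk_getElem_zero hw h0] at this
    · -- y word fact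
      have := walk_word_take hw.2.2 (show p.length = D + 1 from hplen) (show m ≤ D by omega)
        (show m ≤ D by omega)
      rw [isWalk_getElem_last hw (show p.length = D + 1 from hplen)] at this
      have hDm : D - m = i + k := by omega
      have h1 : D - m < p.length := by omega
      have hz : p[D - m]'h1 = p[i+k]'hik' := by
        have e1 : p[D - m]? = p[i+k]? := by rw [hDm]
        rw [List.getElem?_eq_getElem h1, List.getElem?_eq_getElem hik'] at e1
        exact Option.some_injective _ e1
      rw [hz] at this
      exact this.symm
  -- the injection
  let f : Vertex d D × Vertex d D →
      (Vertex d D × Vertex d D) × ((Fin i → Fin d) × (Fin m → Fin d)) :=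
    fun xy => (((wk xy).getD i xy.1, (wk xy).getD (i+k) xy.1),
       (fun j => pi hd0 (xy.1.word.getD j 0) (xy.1.word.getD (j+1) 0)),
       (fun j => pi hd0 (xy.2.word.getD (D - m + j) 0) (xy.2.word.getD (D - m + j - 1) 0)))
  have hmaps : Set.MapsTo f S (T ×ˢ (Set.univ : Set ((Fin i → Fin d) × (Fin m → Fin d)))) := by
    intro xy h
    obtain ⟨hi', hik', hg1, hg2, hT, _, _⟩ := main xy h
    simp only [f, Set.mem_prod, Set.mem_univ, and_true]
    rw [hg1, hg2]
    exact hT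
  have hinj : Set.InjOn f S := by
    intro a ha b hb heq
    obtain ⟨hia, hika, hga1, hga2, hTa, hxa, hya⟩ := main a ha
    obtain ⟨hib, hikb, hgb1, hgb2, hTb, hxb, hyb⟩ := main b hb
    have h1 : (wk a)[i]'hia = (wk b)[i]'hib := by
      have := congrArg (fun z => z.1.1) heq
      simp only [f] at this
      rwa [hga1, hgb1] at this
    have h2 : (wk a)[i+k]'hika = (wk b)[i+k]'hikb := by
      have := congrArg (fun z => z.1.2) heq
      simp only [f] at this
      rwa [hga2, hgb2] at this
    have hc1 : ∀ j : Fin i, pi hd0 (a.1.word.getD j 0) (a.1.word.getD (j+1) 0)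
        = pi hd0 (b.1.word.getD j 0) (b.1.word.getD (j+1) 0) := by
      intro j
      have := congrArg (fun z => z.2.1) heq
      simp only [f] at this
      exact congrFun this j
    have hc2 : ∀ j : Fin m, pi hd0 (a.2.word.getD (D - m + j) 0) (a.2.word.getD (D - m + j - 1) 0)
        = pi hd0 (b.2.word.getD (D - m + j) 0) (b.2.word.getD (D - m + j - 1) 0) := by
      intro j
      have := congrArg (fun z => z.2.2) heq
      simp only [f] at this
      exact congrFun this j
    have hx : a.1 = b.1 := by
      apply Vertex.ext'
      apply recover_right (pi hd0) (fun a a' b h1 h2 h3 => pi_inj hd0 h1 h2 h3) (0 : Fin (d+1))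
        a.1.chain b.1.chain (by rw [a.1.length_eq, b.1.length_eq])
        (show i < a.1.word.length by rw [a.1.length_eq]; omega)
      · rw [hxa, hxb, h1]
      · intro j hj
        have hj' : j < i := hj
        exact hc1 ⟨j, hj'⟩
    have hy : a.2 = b.2 := by
      apply Vertex.ext'
      apply recover_left (pi hd0) (fun a a' b h1 h2 h3 => pi_inj hd0 h1 h2 h3) (0 : Fin (d+1))
        a.2.chain b.2.chain (by rw [a.2.length_eq, b.2.length_eq])
        (show 1 ≤ D - m by omega) (show D - m ≤ a.2.word.length by rw [a.2.length_eq]; omega)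
      · rw [hya, hyb, h2]
      · intro j hj1 hj2
        have hjD : j < D := by rwa [a.2.length_eq] at hj2
        have hjm : j - (D - m) < m := by omega
        have := hc2 ⟨j - (D - m), hjm⟩
        simpa [show D - m + (j - (D - m)) = j by omega] using this
    exact Prod.ext hx hy
  have hfin : (T ×ˢ (Set.univ : Set ((Fin i → Fin d) × (Fin m → Fin d)))).Finite :=
    Set.toFinite _
  have hcard : (T ×ˢ (Set.univ : Set ((Fin i → Fin d) × (Fin m → Fin d)))).ncard
      = T.ncard * (d ^ (D - k)) := by
    rw [← Nat.card_coe_set_eq, Nat.card_congr (Equiv.Set.prod _ _), Nat.card_prod]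
    rw [Nat.card_coe_set_eq]
    congr 1
    rw [Nat.card_congr (Equiv.Set.univ _), Nat.card_prod, Nat.card_fun, Nat.card_fun]
    simp [Nat.card_eq_fintype_card]
    rw [← pow_add, him]
  calc N e D t = S.ncard := hNS
    _ ≤ (T ×ˢ (Set.univ : Set ((Fin i → Fin d) × (Fin m → Fin d)))).ncard :=
        Set.ncard_le_ncard_of_injOn f hmaps hinj hfin
    _ = T.ncard * d ^ (D - k) := hcard
    _ = d ^ (D - k) * N e k t' := by rw [hNT, Nat.mul_comm]
theorem sum_div_count {M : Type*} [AddCommMonoid M] (g : ℕ → M) (A k : ℕ) (hk : 0 < k) :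
    ∑ n ∈ Finset.range (A * k), g (n / k) = A • 0 + ∑ t ∈ Finset.range A, k • g t := by
  induction A with
  | zero => simp
  | succ A ih =>
    rw [Nat.succ_mul, Finset.sum_range_add, ih, Finset.sum_range_succ]
    have : ∀ j ∈ Finset.range k, g ((A * k + j) / k) = g A := by
      intro j hj
      simp only [Finset.mem_range] at hj
      congr 1
      rw [Nat.add_comm, Nat.add_mul_div_right _ _ hk, Nat.div_eq_of_lt hj]
      omega
    rw [Finset.sum_congr rfl this, Finset.sum_const, Finset.card_range]
    simp [add_assoc]

theorem Icc_sum_eq {M : Type*} [AddCommMonoid M] (g : ℕ → M) (A : ℕ) :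
    ∑ t ∈ Finset.Icc 1 A, g t = ∑ t ∈ Finset.range A, g (t + 1) := by
  rw [← Finset.Ico_add_one_right_eq_Icc, Finset.sum_Ico_eq_sum_range]
  simp [Nat.add_comm]

theorem key2 (hd : 2 ≤ d) (e : Edge d D) {k : ℕ} (hk1 : 1 ≤ k) (hkD : k ≤ D) :
    k * U e D ≤ D * (d ^ (D - k) * U e k) := by
  have hD1 : 1 ≤ D := hk1.trans hkD
  have h1 : k * U e D = ∑ n ∈ Finset.range (D * k), N e D (n / k + 1) := by
    rw [show (fun n => N e D (n / k + 1)) = (fun n => (fun t0 => N e D (t0 + 1)) (n / k)) from rfl]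
    rw [sum_div_count (fun t0 => N e D (t0 + 1)) D k hk1]
    simp only [smul_zero, zero_add, smul_eq_mul]
    rw [← Finset.mul_sum, U, Icc_sum_eq (fun t => N e D t) D]
    ring
  have h2 : D * (d ^ (D-k) * U e k) = ∑ n ∈ Finset.range (k * D), d ^ (D-k) * N e k (n / D + 1) := by
    rw [show (fun n => d ^ (D-k) * N e k (n / D + 1))
      = (fun n => (fun t0 => d ^ (D-k) * N e k (t0 + 1)) (n / D)) from rfl]
    rw [sum_div_count (fun t0 => d ^ (D-k) * N e k (t0 + 1)) k D hD1]
    simp only [smul_zero, zero_add, smul_eq_mul]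
    rw [← Finset.mul_sum, ← Finset.mul_sum, U, Icc_sum_eq (fun t => N e k t) k]
    ring
  rw [h1, h2, show D * k = k * D by ring]
  apply Finset.sum_le_sum
  intro n hn
  simp only [Finset.mem_range] at hn
  have hD0 : 0 < D := hD1
  have hk0 : 0 < k := hk1
  have ht'le : n / D < k := by rw [Nat.div_lt_iff_lt_mul hD0]; omega
  have htle : n / k < D := by
    rw [Nat.div_lt_iff_lt_mul hk0]
    have : D * k = k * D := Nat.mul_comm D k
    omega
  have hmono : n / D ≤ n / k := Nat.div_le_div_left hkD hk0
  have hwin : n / k ≤ n / D + (D - k) := by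
    have hnq : D * (n / D) + n % D = n := Nat.div_add_mod n D
    have hmod : n % D < D := Nat.mod_lt n hD0
    have h1 : D * (n / D) = (n / D) * k + (D - k) * (n / D) := by
      have hD : D = k + (D - k) := by omega
      calc D * (n / D) = (k + (D - k)) * (n / D) := by rw [← hD]
        _ = (n / D) * k + (D - k) * (n / D) := by ring
    have h2 : ((n / D) + (D - k) + 1) * k = (n / D) * k + (D - k) * k + k := by ring
    have h3 : (D - k) * (n / D) + (D - k) ≤ (D - k) * k := by
      calc (D - k) * (n / D) + (D - k) = (D - k) * ((n / D) + 1) := by ring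
        _ ≤ (D - k) * k := Nat.mul_le_mul_left _ (by omega)
    have h4 : n < ((n / D) + (D - k) + 1) * k := by omega
    have h5 : n / k < (n / D) + (D - k) + 1 := (Nat.div_lt_iff_lt_mul hk0).mpr h4
    omega
  refine key hd e (Nat.succ_le_succ (Nat.zero_le _)) (Nat.succ_le_of_lt ht'le) hkD
    (Nat.succ_le_succ hmono) ((Nat.succ_le_succ hwin).trans (le_of_eq (by simp [Nat.succ_eq_add_one]; ring)))
theorem sum_bound (d : ℕ) (hd : 2 ≤ d) (D : ℕ) (hD : 1 ≤ D) :
    (d:ℝ)/((d:ℝ)-1) * D - (d:ℝ)/(((d:ℝ)-1)^2)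
      ≤ ∑ k ∈ Finset.Icc 1 D, (k:ℝ) * ((d:ℝ)⁻¹)^(D-k) := by
  have hc2 : (2:ℝ) ≤ (d:ℝ) := by exact_mod_cast hd
  have hc1 : (1:ℝ) ≤ (d:ℝ) - 1 := by linarith
  have hcne : (d:ℝ) - 1 ≠ 0 := by linarith
  have hc0 : (0:ℝ) < (d:ℝ) := by linarith
  have hc0' : (d:ℝ) ≠ 0 := ne_of_gt hc0
  induction D, hD using Nat.le_induction with
  | base =>
    simp only [Finset.Icc_self, Finset.sum_singleton, Nat.sub_self, pow_zero,
      Nat.cast_one, one_mul, mul_one]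
    have hpos : (0:ℝ) < ((d:ℝ)-1)^2 := by positivity
    have heq : (d:ℝ)/((d:ℝ)-1) - (d:ℝ)/(((d:ℝ)-1)^2)
        = ((d:ℝ)*((d:ℝ)-1) - (d:ℝ))/(((d:ℝ)-1)^2) := by
      field_simp
    rw [heq, div_le_one hpos]
    nlinarith
  | succ D hD ih =>
    rw [Finset.sum_Icc_succ_top (by omega : 1 ≤ D + 1)]
    have hstep : ∑ k ∈ Finset.Icc 1 D, (k:ℝ) * ((d:ℝ)⁻¹)^(D+1-k)
        = ((d:ℝ)⁻¹) * ∑ k ∈ Finset.Icc 1 D, (k:ℝ) * ((d:ℝ)⁻¹)^(D-k) := by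
      rw [Finset.mul_sum]
      apply Finset.sum_congr rfl
      intro k hk
      simp only [Finset.mem_Icc] at hk
      have hsub : D + 1 - k = (D - k) + 1 := by omega
      rw [hsub, pow_succ]
      ring
    rw [hstep]
    simp only [Nat.sub_self, pow_zero, mul_one]
    have hineq : ((d:ℝ)⁻¹) * ((d:ℝ)/((d:ℝ)-1) * D - (d:ℝ)/(((d:ℝ)-1)^2))
        ≤ ((d:ℝ)⁻¹) * ∑ k ∈ Finset.Icc 1 D, (k:ℝ) * ((d:ℝ)⁻¹)^(D-k) :=
      mul_le_mul_of_nonneg_left ih (by positivity)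
    have hid : (d:ℝ)/((d:ℝ)-1) * ((D:ℝ)+1) - (d:ℝ)/(((d:ℝ)-1)^2)
        = ((d:ℝ)⁻¹) * ((d:ℝ)/((d:ℝ)-1) * D - (d:ℝ)/(((d:ℝ)-1)^2)) + ((D:ℝ)+1) := by
      field_simp
      ring
    push_cast
    rw [hid]
    linarith
end Kautz

theorem statement9 (d D : ℕ) (hd : 2 ≤ d) (e : Kautz.Edge d D) :
    ((d : ℝ) / ((d : ℝ) - 1)) * (1 - 1 / ((D : ℝ) * ((d : ℝ) - 1))) *
        (Kautz.U e D : ℝ)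
      ≤ (Kautz.cong e : ℝ) := by
  rcases Nat.eq_zero_or_pos D with hD0 | hD1
  · subst hD0
    simp only [Kautz.U, Finset.Icc_eq_empty_of_lt (by omega : (0:ℕ) < 1)]
    simp
  · have hc2 : (2:ℝ) ≤ (d:ℝ) := by exact_mod_cast hd
    have hcne : (d:ℝ) - 1 ≠ 0 := by linarith
    have hc0' : (d:ℝ) ≠ 0 := by linarith
    have hDpos : (0:ℝ) < (D:ℝ) := by exact_mod_cast hD1
    -- termwise bound in ℝ
    have hterm : ∀ k ∈ Finset.Icc 1 D,
        (k:ℝ) * ((d:ℝ)⁻¹)^(D-k) * (Kautz.U e D : ℝ) ≤ (D:ℝ) * (Kautz.U e k : ℝ) := by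
      intro k hk
      simp only [Finset.mem_Icc] at hk
      have h := Kautz.key2 hd e hk.1 hk.2
      have hcast : (k:ℝ) * (Kautz.U e D : ℝ) ≤ (D:ℝ) * ((d:ℝ)^(D-k) * (Kautz.U e k : ℝ)) := by
        exact_mod_cast h
      have hr : (0:ℝ) ≤ ((d:ℝ)⁻¹)^(D-k) := by positivity
      calc (k:ℝ) * ((d:ℝ)⁻¹)^(D-k) * (Kautz.U e D : ℝ)
          = ((k:ℝ) * (Kautz.U e D : ℝ)) * ((d:ℝ)⁻¹)^(D-k) := by ring
        _ ≤ ((D:ℝ) * ((d:ℝ)^(D-k) * (Kautz.U e k : ℝ))) * ((d:ℝ)⁻¹)^(D-k) :=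
            mul_le_mul_of_nonneg_right hcast hr
        _ = (D:ℝ) * (Kautz.U e k : ℝ) * ((d:ℝ)^(D-k) * ((d:ℝ)⁻¹)^(D-k)) := by ring
        _ = (D:ℝ) * (Kautz.U e k : ℝ) := by
            rw [← mul_pow, mul_inv_cancel₀ hc0', one_pow, mul_one]
    have hsum : (∑ k ∈ Finset.Icc 1 D, (k:ℝ) * ((d:ℝ)⁻¹)^(D-k)) * (Kautz.U e D : ℝ)
        ≤ (D:ℝ) * (Kautz.cong e : ℝ) := by
      rw [Finset.sum_mul]
      have hcong : (Kautz.cong e : ℝ) = ∑ k ∈ Finset.Icc 1 D, (Kautz.U e k : ℝ) := by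
        rw [Kautz.cong]
        push_cast
        rfl
      rw [hcong, Finset.mul_sum]
      exact Finset.sum_le_sum hterm
    have hS := Kautz.sum_bound d hd D hD1
    have hUpos : (0:ℝ) ≤ (Kautz.U e D : ℝ) := Nat.cast_nonneg _
    have hfinal : ((d:ℝ)/((d:ℝ)-1) * D - (d:ℝ)/(((d:ℝ)-1)^2)) * (Kautz.U e D : ℝ)
        ≤ (D:ℝ) * (Kautz.cong e : ℝ) :=
      le_trans (mul_le_mul_of_nonneg_right hS hUpos) hsum
    have hLHS : ((d : ℝ) / ((d : ℝ) - 1)) * (1 - 1 / ((D : ℝ) * ((d : ℝ) - 1)))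
        = ((d:ℝ)/((d:ℝ)-1) * D - (d:ℝ)/(((d:ℝ)-1)^2)) / D := by
      field_simp
    rw [hLHS, div_mul_eq_mul_div, div_le_iff₀ hDpos]
    calc ((d:ℝ)/((d:ℝ)-1) * D - (d:ℝ)/(((d:ℝ)-1)^2)) * (Kautz.U e D : ℝ)
        ≤ (D:ℝ) * (Kautz.cong e : ℝ) := hfinal
      _ = (Kautz.cong e : ℝ) * D := by ring
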